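/- arXiv:0801.2034 — 3 statements merged into one kernel-verified Lean document; each statement's English description precedes it below -/
import Mathlib

section
/- Let Σ be a Hermitian positive definite MN×MN complex matrix with eigenvalues in [λ_min, λ_max], λ_min > 0, and σ² > 0. Then for every x ∈ ℂ^N and every y ∈ ℂ^M, tr[((σ² + λ_min·r)·𝟙_M)⁻¹ · y·yᴴ] ≥ tr[(σ²·𝟙_M + (𝟙_M ⊗ xᴴ)·Σ·(𝟙_M ⊗ x))⁻¹ · y·yᴴ] whenever r ≤ ‖x‖². -/
open Matrix MeasureTheory Filter
open scoped Kronecker ComplexOrder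

/-- A column matrix built from a vector. -/
noncomputable def colMat {N : ℕ} (v : Fin N → ℂ) : Matrix (Fin N) (Fin 1) ℂ :=
  Matrix.of fun i _ => v i

/-- The channel covariance matrix `σ²·1_M + (1_M ⊗ xᴴ)·Σ·(1_M ⊗ x)`. -/
noncomputable def Cmat (M N : ℕ) (σ2 : ℝ) (S : Matrix (Fin M × Fin N) (Fin M × Fin N) ℂ)
    (v : Fin N → ℂ) : Matrix (Fin M × Fin 1) (Fin M × Fin 1) ℂ :=
  (σ2 : ℂ) • 1 + ((1 : Matrix (Fin M) (Fin M) ℂ) ⊗ₖ (colMat v)ᴴ) * S *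
    ((1 : Matrix (Fin M) (Fin M) ℂ) ⊗ₖ colMat v)

/-- Squared Euclidean norm `‖v‖²` of a complex vector. -/
noncomputable def nsq {ι : Type*} [Fintype ι] (v : ι → ℂ) : ℝ := ∑ i, Complex.normSq (v i)

/-- The Rayleigh fading conditional output density
`p(y|x) = exp(-tr[C(x)⁻¹ y yᴴ]) / (π^M det C(x))`. -/
noncomputable def pdens (M N : ℕ) (σ2 : ℝ) (S : Matrix (Fin M × Fin N) (Fin M × Fin N) ℂ)
    (v : Fin N → ℂ) (y : Fin M × Fin 1 → ℂ) : ℝ :=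
  Real.exp (-(Matrix.trace ((Cmat M N σ2 S v)⁻¹ * Matrix.vecMulVec y (star y))).re) /
    (Real.pi ^ M * ((Cmat M N σ2 S v).det).re)

section aux
variable {n : Type*} [Fintype n] [DecidableEq n]

omit [DecidableEq n] in
lemma real_smul_posSemidef {A : Matrix n n ℂ} (hA : A.PosSemidef) {t : ℝ} (ht : 0 ≤ t) :
    ((t : ℂ) • A).PosSemidef := by
  constructor
  · simp [Matrix.IsHermitian, Matrix.conjTranspose_smul, hA.isHermitian.eq]
  · intro x
    exact (hA.smul (show (0 : ℂ) ≤ (t : ℂ) by exact_mod_cast ht)).2 x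

lemma sub_smul_one_posSemidef {A : Matrix n n ℂ} (hA : A.IsHermitian) {c : ℝ}
    (h : ∀ i, c ≤ hA.eigenvalues i) : (A - (c : ℂ) • 1).PosSemidef := by
  set U : Matrix n n ℂ := (hA.eigenvectorUnitary : Matrix n n ℂ)
  have hUU : U * star U = 1 := (Matrix.mem_unitaryGroup_iff).mp hA.eigenvectorUnitary.2
  have hkey : A - (c : ℂ) • 1 =
      U * (Matrix.diagonal (fun i => ((hA.eigenvalues i - c : ℝ) : ℂ))) * Uᴴ := by
    have hdg : Matrix.diagonal (fun i => ((hA.eigenvalues i - c : ℝ) : ℂ)) =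
        Matrix.diagonal (RCLike.ofReal ∘ hA.eigenvalues) - (c : ℂ) • 1 := by
      rw [Matrix.smul_one_eq_diagonal, Matrix.diagonal_sub]
      ext i
      push_cast
      rfl
    rw [hdg, Matrix.mul_sub, Matrix.sub_mul, ← Matrix.star_eq_conjTranspose]
    rw [mul_smul_comm, smul_mul_assoc, mul_one, hUU]
    exact congrArg (fun X => X - (c : ℂ) • 1) hA.spectral_theorem
  rw [hkey]
  exact (Matrix.posSemidef_diagonal_iff.mpr
    (fun i => by simpa using (sub_nonneg.mpr (h i)))).mul_mul_conjTranspose_same U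

omit [DecidableEq n] in
lemma trace_mul_vecMulVec (A : Matrix n n ℂ) (y : n → ℂ) :
    Matrix.trace (A * Matrix.vecMulVec y (star y)) = star y ⬝ᵥ (A *ᵥ y) := by
  simp only [Matrix.trace, Matrix.diag_apply, Matrix.mul_apply, Matrix.vecMulVec_apply,
    dotProduct, Matrix.mulVec, Pi.star_apply, Finset.mul_sum]
  exact Finset.sum_congr rfl fun i _ => Finset.sum_congr rfl fun j _ => by ring

end aux

/-- Whenever `r ≤ ‖x‖²`,
`tr[((σ²+λ_min·r)·1_M)⁻¹ y yᴴ] ≥ tr[(σ²·1_M + (1_M⊗xᴴ)Σ(1_M⊗x))⁻¹ y yᴴ]`. -/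
theorem trace_inv_yyH_bound {M N : ℕ} (σ2 lmin lmax r : ℝ)
    (S : Matrix (Fin M × Fin N) (Fin M × Fin N) ℂ) (hS : S.PosDef)
    (hmin : ∀ i, lmin ≤ hS.1.eigenvalues i) (hmax : ∀ i, hS.1.eigenvalues i ≤ lmax)
    (hlmin : 0 < lmin) (hσ : 0 < σ2) (hr : 0 ≤ r)
    (v : Fin N → ℂ) (hrv : r ≤ nsq v) (y : Fin M × Fin 1 → ℂ) :
    (Matrix.trace ((Cmat M N σ2 S v)⁻¹ * Matrix.vecMulVec y (star y))).re ≤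
    (Matrix.trace (((((σ2 + lmin * r : ℝ) : ℂ) •
        (1 : Matrix (Fin M × Fin 1) (Fin M × Fin 1) ℂ))⁻¹) *
      Matrix.vecMulVec y (star y))).re := by
  set c : ℝ := σ2 + lmin * r with hcdef
  have hc : 0 < c := by positivity
  have hcC : (c : ℂ) ≠ 0 := by exact_mod_cast hc.ne'
  set B : Matrix (Fin M × Fin N) (Fin M × Fin 1) ℂ :=
    (1 : Matrix (Fin M) (Fin M) ℂ) ⊗ₖ colMat v with hBdef
  -- conjugate transpose of the Kronecker factor
  have hBH : ((1 : Matrix (Fin M) (Fin M) ℂ) ⊗ₖ (colMat v)ᴴ) = Bᴴ := by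
    ext ⟨i1, i2⟩ ⟨j1, j2⟩
    simp [hBdef, Matrix.conjTranspose_apply, Matrix.kroneckerMap_apply, Matrix.one_apply,
      eq_comm, apply_ite (star : ℂ → ℂ)]
  -- Bᴴ B = ‖v‖² • 1
  have hcol : (colMat v)ᴴ * colMat v = ((nsq v : ℝ) : ℂ) • (1 : Matrix (Fin 1) (Fin 1) ℂ) := by
    ext i j
    fin_cases i; fin_cases j
    simp only [Matrix.mul_apply, Matrix.conjTranspose_apply, colMat, Matrix.of_apply,
      Matrix.smul_apply, Matrix.one_apply_eq, smul_eq_mul, mul_one, nsq]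
    push_cast
    exact Finset.sum_congr rfl fun k _ => by
      rw [Complex.star_def, mul_comm, Complex.mul_conj]
  have hBB : Bᴴ * B = ((nsq v : ℝ) : ℂ) • 1 := by
    rw [← hBH, hBdef, ← Matrix.mul_kronecker_mul, one_mul, hcol, Matrix.kronecker_smul,
      Matrix.one_kronecker_one]
  -- S - lmin • 1 is PSD
  have hSd : (S - (lmin : ℂ) • 1).PosSemidef := sub_smul_one_posSemidef hS.1 hmin
  -- decomposition Cmat = c•1 + D with D PSD
  set D : Matrix (Fin M × Fin 1) (Fin M × Fin 1) ℂ :=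
    Bᴴ * (S - (lmin : ℂ) • 1) * B + ((lmin * (nsq v - r) : ℝ) : ℂ) • 1 with hDdef
  have hDpsd : D.PosSemidef := by
    refine (hSd.conjTranspose_mul_mul_same B).add ?_
    exact real_smul_posSemidef Matrix.PosSemidef.one (by nlinarith)
  have hCD : Cmat M N σ2 S v = (c : ℂ) • 1 + D := by
    rw [Cmat, hBH, ← hBdef, hDdef]
    rw [Matrix.mul_sub, Matrix.sub_mul]
    simp only [Matrix.mul_smul, Matrix.smul_mul]
    rw [Matrix.mul_one, hBB, smul_smul, hcdef]
    push_cast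
    module
  have hCpd : (Cmat M N σ2 S v).PosDef := by
    rw [hCD]
    refine Matrix.PosDef.add_posSemidef ?_ hDpsd
    rw [Matrix.smul_one_eq_diagonal]
    exact Matrix.posDef_diagonal_iff.mpr fun i => by exact_mod_cast hc
  set C := Cmat M N σ2 S v with hCdef
  have hdet : IsUnit C.det := isUnit_iff_ne_zero.mpr hCpd.det_pos.ne'
  have hCE : C * C⁻¹ = 1 := Matrix.mul_nonsing_inv _ hdet
  have hEC : C⁻¹ * C = 1 := Matrix.nonsing_inv_mul _ hdet
  have hEH : (C⁻¹)ᴴ = C⁻¹ := hCpd.posSemidef.inv.isHermitian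
  have hCC : (c : ℂ)⁻¹ • (D * D) + D = (c : ℂ)⁻¹ • (C * C) - C := by
    rw [hCD]
    simp only [Matrix.add_mul, Matrix.mul_add, smul_mul_assoc, mul_smul_comm, mul_one,
      one_mul, smul_add, smul_smul]
    rw [← mul_assoc, inv_mul_cancel₀ hcC]
    simp only [one_mul, one_smul]
    abel
  have hkey : (c : ℂ)⁻¹ • (1 : Matrix (Fin M × Fin 1) (Fin M × Fin 1) ℂ) - C⁻¹ =
      (C⁻¹)ᴴ * ((c : ℂ)⁻¹ • (D * D) + D) * C⁻¹ := by
    rw [hEH]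
    have : C⁻¹ * ((c : ℂ)⁻¹ • (D * D) + D) * C⁻¹ = (c : ℂ)⁻¹ • 1 - C⁻¹ := by
      rw [hCC, Matrix.mul_sub, Matrix.sub_mul]
      simp only [mul_smul_comm, smul_mul_assoc, Matrix.mul_assoc, hCE, mul_one, one_mul, hEC]
    exact this.symm
  have hDDpsd : ((c : ℂ)⁻¹ • (D * D) + D).PosSemidef := by
    have h1 : (D * D).PosSemidef := by
      rw [← pow_two]
      exact hDpsd.pow 2
    have h2 : ((c : ℂ)⁻¹ • (D * D)).PosSemidef := by
      have := real_smul_posSemidef h1 (le_of_lt (inv_pos.mpr hc))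
      rwa [Complex.ofReal_inv] at this
    exact h2.add hDpsd
  have hpsd2 : ((c : ℂ)⁻¹ • (1 : Matrix (Fin M × Fin 1) (Fin M × Fin 1) ℂ) - C⁻¹).PosSemidef := by
    rw [hkey]
    exact hDDpsd.conjTranspose_mul_mul_same C⁻¹
  have hinv : (((c : ℝ) : ℂ) • (1 : Matrix (Fin M × Fin 1) (Fin M × Fin 1) ℂ))⁻¹ =
      (c : ℂ)⁻¹ • 1 := by
    apply Matrix.inv_eq_right_inv
    rw [smul_mul_assoc, one_mul, smul_smul, mul_inv_cancel₀ hcC, one_smul]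
  have h0 := hpsd2.re_dotProduct_nonneg y
  rw [Matrix.sub_mulVec, dotProduct_sub] at h0
  rw [hinv, trace_mul_vecMulVec, trace_mul_vecMulVec]
  simp only [map_sub, RCLike.re_to_complex] at h0 ⊢
  linarith
end

section
/- Let (W(·|x))_{x∈X} be a channel with input alphabet X and output densities on ℂ^M. Suppose there exist λ > 0, distinct inputs x₁,…,xₙ ∈ X and pairwise disjoint measurable sets B₁,…,Bₙ ⊂ ℂ^M with ∫_{B_i} p(y|x_i) dy ≥ λ for all i. Then for the uniform input measure μₙ = (1/n)·Σᵢ δ_{x_i}, the mutual information satisfies I(μₙ; W) ≥ λ·log n − 1. -/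
open MeasureTheory

/-- If there are `n` distinct inputs and pairwise disjoint decoding sets, each with success
probability at least `λ`, then the mutual information of the uniform input measure
satisfies `I(μₙ; W) ≥ λ·log n − 1` (Fano's inequality with block length 1). -/
theorem mutual_info_lower_bound_from_decoding {X : Type*} {M : ℕ} (n : ℕ) (hn : 1 ≤ n)
    (p : X → (Fin M → ℂ) → ℝ)
    (hp0 : ∀ x y, 0 ≤ p x y)
    (hp1 : ∀ x, ∫ y : Fin M → ℂ, p x y = 1)
    (lam : ℝ) (hlam : 0 < lam)
    (x : Fin n → X) (hx : Function.Injective x)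
    (B : Fin n → Set (Fin M → ℂ))
    (hmeas : ∀ i, MeasurableSet (B i))
    (hdisj : Pairwise (Function.onFun Disjoint B))
    (hlow : ∀ i, lam ≤ ∫ y in B i, p (x i) y) :
    lam * Real.log n - 1 ≤
      (1 / n : ℝ) * ∑ i, ∫ y : Fin M → ℂ, p (x i) y *
        Real.log (p (x i) y / ((1 / n : ℝ) * ∑ j, p (x j) y)) := by
  have hnR : (1:ℝ) ≤ n := by exact_mod_cast hn
  have hnpos : (0:ℝ) < n := by linarith
  set F : (Fin M → ℂ) → ℝ := fun y => (1 / n : ℝ) * ∑ j, p (x j) y with hF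
  have hpint : ∀ x0, Integrable (p x0) := by
    intro x0
    by_contra h
    have h1 := hp1 x0
    rw [integral_undef h] at h1
    exact one_ne_zero h1.symm
  have hFint : Integrable F := (integrable_finset_sum _ (fun j _ => hpint (x j))).const_mul _
  have hF0 : ∀ y, 0 ≤ F y := fun y =>
    mul_nonneg (by positivity) (Finset.sum_nonneg fun j _ => hp0 _ _)
  have hFtot : ∫ y, F y = 1 := by
    simp only [hF]
    rw [integral_const_mul, integral_finset_sum _ (fun j _ => hpint (x j))]
    simp only [hp1, Finset.sum_const, Finset.card_univ, Fintype.card_fin, nsmul_eq_mul,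
      mul_one]
    field_simp
  have hpF : ∀ i y, p (x i) y ≤ n * F y := by
    intro i y
    have h1 : p (x i) y ≤ ∑ j, p (x j) y :=
      Finset.single_le_sum (fun j _ => hp0 (x j) y) (Finset.mem_univ i)
    have h2 : (n:ℝ) * F y = ∑ j, p (x j) y := by
      rw [hF]; field_simp
    linarith
  set b : Fin n → ℝ := fun i => ∫ y in B i, F y with hb
  have hlogn : 0 ≤ Real.log n := Real.log_nonneg hnR
  -- key pointwise inequality
  have hkey : ∀ i (c : ℝ), 1 ≤ c → ∀ y,
      p (x i) y * Real.log c + (p (x i) y - c * F y) ≤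
      p (x i) y * Real.log (p (x i) y / F y) := by
    intro i c hc y
    have hcpos : (0:ℝ) < c := lt_of_lt_of_le one_pos hc
    rcases eq_or_lt_of_le (hp0 (x i) y) with h0 | h0
    · simp only [← h0, zero_mul, zero_add, zero_sub, mul_zero, neg_nonpos, zero_div]
      nlinarith [mul_nonneg hcpos.le (hF0 y)]
    · have hFy : 0 < F y := by nlinarith [hpF i y]
      have h1 : Real.log (c * F y / p (x i) y) ≤ c * F y / p (x i) y - 1 :=
        Real.log_le_sub_one_of_pos (by positivity)
      have h2 : Real.log (p (x i) y / F y) = Real.log c + Real.log (p (x i) y / (c * F y)) := by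
        rw [Real.log_div (ne_of_gt h0) (ne_of_gt hFy), Real.log_div (ne_of_gt h0) (by positivity),
          Real.log_mul (ne_of_gt hcpos) (ne_of_gt hFy)]
        ring
      have h3 : Real.log (p (x i) y / (c * F y)) = - Real.log (c * F y / p (x i) y) := by
        rw [← Real.log_inv]
        congr 1
        field_simp
      have h6 : p (x i) y * (1 - c * F y / p (x i) y) = p (x i) y - c * F y := by
        field_simp
      have h5 : p (x i) y - c * F y ≤ p (x i) y * (- Real.log (c * F y / p (x i) y)) := by
        rw [← h6]
        exact mul_le_mul_of_nonneg_left (by linarith) h0.le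
      rw [h2, h3, mul_add]
      linarith
  -- per-index bound
  have hmain : ∀ i, lam * Real.log n - ((n:ℝ) - 1) * b i ≤
      ∫ y, p (x i) y * Real.log (p (x i) y / F y) := by
    intro i
    set g : (Fin M → ℂ) → ℝ := fun y => p (x i) y * Real.log (p (x i) y / F y) with hg
    have hgub : ∀ y, g y ≤ p (x i) y * Real.log n := by
      intro y
      rcases eq_or_lt_of_le (hp0 (x i) y) with h0 | h0
      · simp [hg, ← h0]
      · have hFy : 0 < F y := by nlinarith [hpF i y]
        have hdiv : p (x i) y / F y ≤ n := by
          rw [div_le_iff₀ hFy]; nlinarith [hpF i y]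
        exact mul_le_mul_of_nonneg_left (Real.log_le_log (by positivity) hdiv) h0.le
    have hglb : ∀ y, p (x i) y - F y ≤ g y := by
      intro y
      have := hkey i 1 le_rfl y
      simpa using this
    have hgmeas : AEStronglyMeasurable g volume := by
      exact ((hpint (x i)).aemeasurable.mul
        (Real.measurable_log.comp_aemeasurable
          ((hpint (x i)).aemeasurable.div hFint.aemeasurable))).aestronglyMeasurable
    have hbint : Integrable (fun y => p (x i) y * Real.log n + F y) :=
      ((hpint (x i)).mul_const (Real.log n)).add hFint
    have hgint : Integrable g := by
      refine Integrable.mono' hbint hgmeas (Filter.Eventually.of_forall fun y => ?_)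
      rw [Real.norm_eq_abs, abs_le]
      constructor
      · have h1 : -(p (x i) y * Real.log n + F y) ≤ p (x i) y - F y := by
          nlinarith [mul_nonneg (hp0 (x i) y) hlogn, hp0 (x i) y]
        exact h1.trans (hglb y)
      · exact (hgub y).trans (by nlinarith [hF0 y])
    -- lower comparison function
    set L : (Fin M → ℂ) → ℝ := fun y =>
      (B i).indicator (fun y => p (x i) y * Real.log n - ((n:ℝ) - 1) * F y) y
        + (p (x i) y - F y) with hL
    have hLint : Integrable L := by
      exact ((((hpint (x i)).mul_const (Real.log n)).sub (hFint.const_mul _)).indicator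
        (hmeas i)).add ((hpint (x i)).sub hFint)
    have hLle : ∀ y, L y ≤ g y := by
      intro y
      by_cases hy : y ∈ B i
      · have := hkey i n hnR y
        simp only [hL, Set.indicator_of_mem hy]
        rw [hg]
        nlinarith [this]
      · have := hkey i 1 le_rfl y
        simp only [hL, Set.indicator_of_notMem hy, zero_add]
        rw [hg]
        simp only [Real.log_one, mul_zero, zero_add, one_mul] at this
        linarith
    have e1 : Integrable (fun y =>
        (B i).indicator (fun z => p (x i) z * Real.log n - ((n:ℝ) - 1) * F z) y) :=
      (((hpint (x i)).mul_const (Real.log n)).sub (hFint.const_mul _)).indicator (hmeas i)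
    have e2 : Integrable (fun y => p (x i) y - F y) := (hpint (x i)).sub hFint
    have e3 : IntegrableOn (fun y => p (x i) y * Real.log n) (B i) volume :=
      ((hpint (x i)).mul_const _).integrableOn
    have e4 : IntegrableOn (fun y => ((n:ℝ) - 1) * F y) (B i) volume :=
      (hFint.const_mul _).integrableOn
    have hLI : ∫ y, L y = (∫ y in B i, p (x i) y) * Real.log n - ((n:ℝ) - 1) * b i := by
      simp only [hL]
      rw [integral_add e1 e2, integral_indicator (hmeas i), integral_sub e3 e4,
        integral_sub (hpint (x i)) hFint, hp1, hFtot, integral_mul_const, integral_const_mul]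
      simp [hb]
    have hint_mono : ∫ y, L y ≤ ∫ y, g y := integral_mono hLint hgint hLle
    have halow : lam * Real.log n ≤ (∫ y in B i, p (x i) y) * Real.log n :=
      mul_le_mul_of_nonneg_right (hlow i) hlogn
    rw [hLI] at hint_mono
    linarith
  -- sum of b is at most 1
  have hbsum : ∑ i, b i ≤ 1 := by
    have hU : ∑ i, b i = ∫ y in ⋃ i ∈ Finset.univ, B i, F y := by
      rw [integral_biUnion_finset Finset.univ (fun i _ => hmeas i)
        (fun i _ j _ hij => hdisj hij) (fun i _ => hFint.integrableOn)]
    rw [hU, ← hFtot]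
    exact setIntegral_le_integral hFint (Filter.Eventually.of_forall hF0)
  have hb0 : ∀ i, 0 ≤ b i := fun i =>
    setIntegral_nonneg (hmeas i) (fun y _ => hF0 y)
  -- assemble
  have hsum : ∑ i, (lam * Real.log n - ((n:ℝ) - 1) * b i) ≤
      ∑ i, ∫ y, p (x i) y * Real.log (p (x i) y / F y) :=
    Finset.sum_le_sum (fun i _ => hmain i)
  have hsumL : ∑ i, (lam * Real.log n - ((n:ℝ) - 1) * b i)
      = (n:ℝ) * (lam * Real.log n) - ((n:ℝ) - 1) * ∑ i, b i := by
    rw [Finset.sum_sub_distrib, Finset.sum_const, ← Finset.mul_sum]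
    simp [Finset.card_univ]
  rw [hsumL] at hsum
  have hS : ((n:ℝ) - 1) * ∑ i, b i ≤ n := by
    nlinarith [Finset.sum_nonneg (fun i (_ : i ∈ Finset.univ) => hb0 i)]
  have hT : (n:ℝ) * (lam * Real.log n) - n ≤
      ∑ i, ∫ y, p (x i) y * Real.log (p (x i) y / F y) := by linarith
  have hfinal := mul_le_mul_of_nonneg_left hT (by positivity : (0:ℝ) ≤ 1 / n)
  have heq : (1 / (n:ℝ)) * ((n:ℝ) * (lam * Real.log n) - n) = lam * Real.log n - 1 := by
    field_simp
  rw [heq] at hfinal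
  exact hfinal
end

section
/- Let Σ be Hermitian positive definite with smallest eigenvalue λ_min > 0 and σ² > 0. Then det(σ²𝟙_M + (𝟙_M⊗xᴴ)Σ(𝟙_M⊗x)) ≥ (σ² + λ_min·‖x‖²)^M for all x ∈ ℂ^N, and consequently log det(σ²𝟙_M + (𝟙_M⊗xᴴ)Σ(𝟙_M⊗x)) → ∞ as ‖x‖ → ∞. -/
open Matrix MeasureTheory Filter
open scoped Kronecker ComplexOrder

-- aux lemmas (tested)
lemma shift_posSemidef {n : Type*} [Fintype n] [DecidableEq n]
    {S : Matrix n n ℂ} (hS : S.IsHermitian) {c : ℝ}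
    (hmin : ∀ i, c ≤ hS.eigenvalues i) :
    (S - (c : ℂ) • 1).PosSemidef := by
  have hU : (hS.eigenvectorUnitary : Matrix n n ℂ) * star (hS.eigenvectorUnitary : Matrix n n ℂ) = 1 :=
    Matrix.mem_unitaryGroup_iff.mp hS.eigenvectorUnitary.2
  have key : S - (c : ℂ) • 1 =
      (hS.eigenvectorUnitary : Matrix n n ℂ) *
        Matrix.diagonal (fun i => ((hS.eigenvalues i - c : ℝ) : ℂ)) *
        (hS.eigenvectorUnitary : Matrix n n ℂ)ᴴ := by
    have h1 : (c : ℂ) • (1 : Matrix n n ℂ) =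
        (hS.eigenvectorUnitary : Matrix n n ℂ) * ((c : ℂ) • 1) *
          (hS.eigenvectorUnitary : Matrix n n ℂ)ᴴ := by
      rw [Matrix.mul_smul, mul_one, Matrix.smul_mul]
      congr 1
      exact hU.symm
    calc S - (c:ℂ) • 1
        = (hS.eigenvectorUnitary : Matrix n n ℂ) * Matrix.diagonal (RCLike.ofReal ∘ hS.eigenvalues) *
            star (hS.eigenvectorUnitary : Matrix n n ℂ) - (c:ℂ) • 1 := by
          conv_lhs => rw [hS.spectral_theorem, Unitary.conjStarAlgAut_apply]
      _ = _ := by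
          rw [h1]
          have : star (hS.eigenvectorUnitary : Matrix n n ℂ) = (hS.eigenvectorUnitary : Matrix n n ℂ)ᴴ := rfl
          rw [this, ← Matrix.sub_mul, ← Matrix.mul_sub]
          congr 2
          ext i j
          by_cases h : i = j <;>
            simp [Matrix.diagonal, Matrix.one_apply, h, Complex.ofReal_sub, sub_eq_add_neg]
  rw [key]
  apply Matrix.PosSemidef.mul_mul_conjTranspose_same
  rw [Matrix.posSemidef_diagonal_iff]
  intro i
  rw [Complex.zero_le_real]
  linarith [hmin i]

lemma re_star_dot {n : Type*} [Fintype n] (w : n → ℂ) :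
    (dotProduct (star w) w).re = ∑ i, Complex.normSq (w i) := by
  simp [dotProduct, Complex.mul_re, Complex.normSq_apply]

lemma quad_lower {n : Type*} [Fintype n] [DecidableEq n]
    {S : Matrix n n ℂ} {c : ℝ} (hK : (S - (c : ℂ) • 1).PosSemidef)
    (w : n → ℂ) :
    c * ∑ i, Complex.normSq (w i) ≤ (dotProduct (star w) (S *ᵥ w)).re := by
  have h0 := hK.re_dotProduct_nonneg w
  have hexp : dotProduct (star w) ((S - (c:ℂ) • 1) *ᵥ w)
      = dotProduct (star w) (S *ᵥ w) - (c:ℂ) * dotProduct (star w) w := by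
    rw [Matrix.sub_mulVec, dotProduct_sub, Matrix.smul_mulVec, Matrix.one_mulVec,
      dotProduct_smul, smul_eq_mul]
  rw [hexp] at h0
  have h1 : ((c:ℂ) * dotProduct (star w) w).re = c * ∑ i, Complex.normSq (w i) := by
    rw [Complex.mul_re, Complex.ofReal_re, Complex.ofReal_im, zero_mul, sub_zero, re_star_dot]
  rw [map_sub] at h0
  simp only [RCLike.re_to_complex] at h0
  rw [h1] at h0
  linarith

-- Kronecker factor conjTranspose
lemma kron_conj {M N : ℕ} (v : Fin N → ℂ) :
    ((1 : Matrix (Fin M) (Fin M) ℂ) ⊗ₖ (colMat v)ᴴ) =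
      ((1 : Matrix (Fin M) (Fin M) ℂ) ⊗ₖ colMat v)ᴴ := by
  ext ⟨m, n⟩ ⟨m', j⟩
  simp only [Matrix.kroneckerMap_apply, Matrix.conjTranspose_apply, Matrix.one_apply]
  by_cases h : m = m' <;> simp [h, eq_comm]

-- mulVec of the Kronecker factor
lemma kron_mulVec {M N : ℕ} (v : Fin N → ℂ) (u : Fin M × Fin 1 → ℂ) (m : Fin M) (n : Fin N) :
    (((1 : Matrix (Fin M) (Fin M) ℂ) ⊗ₖ colMat v) *ᵥ u) (m, n) = v n * u (m, 0) := by
  simp only [Matrix.mulVec, dotProduct, Fintype.sum_prod_type,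
    Matrix.kroneckerMap_apply, Matrix.one_apply, colMat, Matrix.of_apply]
  simp [Finset.sum_ite_eq, Fin.sum_univ_one]

lemma sum_normSq_kron {M N : ℕ} (v : Fin N → ℂ) (u : Fin M × Fin 1 → ℂ) :
    ∑ p : Fin M × Fin N,
        Complex.normSq ((((1 : Matrix (Fin M) (Fin M) ℂ) ⊗ₖ colMat v) *ᵥ u) p)
      = nsq v * ∑ p : Fin M × Fin 1, Complex.normSq (u p) := by
  rw [Fintype.sum_prod_type]
  have : ∀ p : Fin M × Fin 1, u p = u (p.1, 0) := by
    rintro ⟨m, j⟩; congr; exact Subsingleton.elim _ _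
  calc ∑ m : Fin M, ∑ n : Fin N,
        Complex.normSq ((((1 : Matrix (Fin M) (Fin M) ℂ) ⊗ₖ colMat v) *ᵥ u) (m, n))
      = ∑ m : Fin M, ∑ n : Fin N, Complex.normSq (v n) * Complex.normSq (u (m, 0)) := by
        refine Finset.sum_congr rfl fun m _ => Finset.sum_congr rfl fun n _ => ?_
        rw [kron_mulVec, Complex.normSq_mul]
    _ = (∑ n : Fin N, Complex.normSq (v n)) * ∑ m : Fin M, Complex.normSq (u (m, 0)) := by
        rw [Finset.sum_comm, ← Finset.sum_mul_sum]
    _ = nsq v * ∑ p : Fin M × Fin 1, Complex.normSq (u p) := by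
        rw [nsq, Fintype.sum_prod_type]
        congr 1
        refine Finset.sum_congr rfl fun m _ => ?_
        rw [Fin.sum_univ_one]


/-- `det(σ²1_M + (1_M⊗xᴴ)Σ(1_M⊗x)) ≥ (σ² + λ_min‖x‖²)^M`, hence
`log det(σ²1_M + (1_M⊗xᴴ)Σ(1_M⊗x)) → ∞` as `‖x‖ → ∞`. -/
theorem det_covariance_lower_bound {M N : ℕ} (hM : 1 ≤ M) (σ2 lmin : ℝ)
    (S : Matrix (Fin M × Fin N) (Fin M × Fin N) ℂ) (hS : S.PosDef)
    (hmin : ∀ i, lmin ≤ hS.1.eigenvalues i)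
    (hlmin : 0 < lmin) (hσ : 0 < σ2) :
    (∀ v : Fin N → ℂ, (σ2 + lmin * nsq v) ^ M ≤ ((Cmat M N σ2 S v).det).re) ∧
    ∀ b : ℝ, ∃ R : ℝ, ∀ v : Fin N → ℂ, R ≤ nsq v →
      b ≤ Real.log (((Cmat M N σ2 S v).det).re) := by
  have hK := shift_posSemidef hS.1 hmin
  have hnsq : ∀ v : Fin N → ℂ, 0 ≤ nsq v := fun v =>
    Finset.sum_nonneg fun _ _ => Complex.normSq_nonneg _
  have main : ∀ v : Fin N → ℂ, (σ2 + lmin * nsq v) ^ M ≤ ((Cmat M N σ2 S v).det).re := by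
    intro v
    set A := ((1 : Matrix (Fin M) (Fin M) ℂ) ⊗ₖ colMat v) with hA
    have hCeq : Cmat M N σ2 S v = (σ2 : ℂ) • 1 + Aᴴ * S * A := by
      rw [Cmat, kron_conj]
    have hC : (Cmat M N σ2 S v).IsHermitian := by
      rw [hCeq]
      refine Matrix.IsHermitian.add ?_ (Matrix.isHermitian_conjTranspose_mul_mul A hS.1)
      rw [Matrix.IsHermitian, Matrix.conjTranspose_smul, Matrix.conjTranspose_one]
      congr 1
      simp [Complex.ext_iff]
    -- eigenvalue lower bound
    have heig : ∀ i, σ2 + lmin * nsq v ≤ hC.eigenvalues i := by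
      intro i
      set u : Fin M × Fin 1 → ℂ := ⇑(hC.eigenvectorBasis i) with hu
      have hunit : ∑ p, Complex.normSq (u p) = 1 := by
        have h1 : ‖hC.eigenvectorBasis i‖ = 1 := hC.eigenvectorBasis.orthonormal.1 i
        have h2 : (inner ℂ (hC.eigenvectorBasis i) (hC.eigenvectorBasis i) : ℂ)
            = dotProduct (star u) u :=
          (EuclideanSpace.inner_eq_star_dotProduct _ _).trans (dotProduct_comm _ _)
        have h3 := inner_self_eq_norm_sq (𝕜 := ℂ) (hC.eigenvectorBasis i)
        rw [← re_star_dot, ← h2]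
        have h4 : RCLike.re (inner ℂ (hC.eigenvectorBasis i) (hC.eigenvectorBasis i) : ℂ) = 1 := by
          rw [h3, h1, one_pow]
        simpa using h4
      have heq := hC.eigenvalues_eq i
      have hmv : (Cmat M N σ2 S v) *ᵥ u = (σ2 : ℂ) • u + Aᴴ *ᵥ (S *ᵥ (A *ᵥ u)) := by
        rw [hCeq, Matrix.add_mulVec, Matrix.smul_mulVec, Matrix.one_mulVec,
          ← Matrix.mulVec_mulVec, ← Matrix.mulVec_mulVec]
      have hdot : dotProduct (star u) ((Cmat M N σ2 S v) *ᵥ u)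
          = (σ2 : ℂ) * dotProduct (star u) u
            + dotProduct (star (A *ᵥ u)) (S *ᵥ (A *ᵥ u)) := by
        rw [hmv, dotProduct_add, dotProduct_smul, smul_eq_mul,
          Matrix.dotProduct_mulVec (star u) Aᴴ, ← Matrix.star_mulVec]
      rw [heq]
      simp only [RCLike.re_to_complex]
      rw [hdot, Complex.add_re]
      have e1 : ((σ2 : ℂ) * dotProduct (star u) u).re = σ2 := by
        rw [Complex.mul_re, Complex.ofReal_re, Complex.ofReal_im, zero_mul, sub_zero,
          re_star_dot, hunit, mul_one]
      rw [e1]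
      have e2 := quad_lower hK (A *ᵥ u)
      rw [sum_normSq_kron v u, hunit, mul_one] at e2
      linarith
    -- determinant
    have hdet : ((Cmat M N σ2 S v).det).re = ∏ i, hC.eigenvalues i := by
      rw [hC.det_eq_prod_eigenvalues]
      norm_cast
    rw [hdet]
    have hcard : (Finset.univ : Finset (Fin M × Fin 1)).card = M := by simp
    calc (σ2 + lmin * nsq v) ^ M
        = ∏ _i : Fin M × Fin 1, (σ2 + lmin * nsq v) := by
          rw [Finset.prod_const, hcard]
      _ ≤ ∏ i, hC.eigenvalues i := by
          refine Finset.prod_le_prod (fun i _ => ?_) (fun i _ => heig i)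
          have := hnsq v
          positivity
  refine ⟨main, fun b => ?_⟩
  refine ⟨(max 1 (Real.exp b) - σ2) / lmin, fun v hv => ?_⟩
  have hbase : max 1 (Real.exp b) ≤ σ2 + lmin * nsq v := by
    have : max 1 (Real.exp b) - σ2 ≤ lmin * nsq v := by
      rw [div_le_iff₀ hlmin] at hv
      linarith [hv]
    linarith
  have h1 : (1 : ℝ) ≤ σ2 + lmin * nsq v := le_trans (le_max_left _ _) hbase
  have hpow : σ2 + lmin * nsq v ≤ (σ2 + lmin * nsq v) ^ M :=
    le_self_pow₀ h1 (by omega)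
  have hexp : Real.exp b ≤ ((Cmat M N σ2 S v).det).re :=
    le_trans (le_max_right 1 (Real.exp b)) (le_trans hbase (le_trans hpow (main v)))
  calc b = Real.log (Real.exp b) := (Real.log_exp b).symm
    _ ≤ Real.log (((Cmat M N σ2 S v).det).re) :=
        Real.log_le_log (Real.exp_pos b) hexp
end
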